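/- A nonzero linearized polynomial f(x) = Σ_{i=0}^{k} c_i x^{q^{si}} over F_{q^n} with c_k ≠ 0 and k ≤ n-1, where gcd(s,n) = 1, has at most q^k roots in F_{q^n}; consequently, the F_q-linear map it induces on F_{q^n} has rank at least n - k. -/

import Mathlib

open Finset

lemma core_lin (F : Type) [Field F] [Fintype F] (q : ℕ) (hq1 : 1 ≤ q)
    (σ : F →+* F) (hfix : Nat.card {x : F | σ x = x} ≤ q) :
    ∀ (k : ℕ) (c : ℕ → F), c k ≠ 0 →
      Nat.card {x : F | ∑ i ∈ Finset.range (k + 1), c i * σ^[i] x = 0} ≤ q ^ k := by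
  classical
  intro k
  induction k with
  | zero =>
    intro c hc
    have : {x : F | ∑ i ∈ Finset.range 1, c i * σ^[i] x = 0} ⊆ {(0 : F)} := by
      intro x hx
      simp only [Set.mem_setOf_eq, Finset.sum_range_one, Function.iterate_zero, id_eq] at hx
      simp [mul_eq_zero.mp hx |>.resolve_left hc]
    calc Nat.card {x : F | ∑ i ∈ Finset.range 1, c i * σ^[i] x = 0}
        ≤ Nat.card ({(0:F)} : Set F) := Nat.card_mono (Set.finite_singleton _) this
      _ ≤ q ^ 0 := by simp
  | succ k IH =>
    intro c hc
    set S : Set F := {x : F | ∑ i ∈ Finset.range (k + 2), c i * σ^[i] x = 0} with hS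
    by_cases hz : ∀ x ∈ S, x = (0 : F)
    · have : S ⊆ {(0:F)} := fun x hx => hz x hx
      calc Nat.card S ≤ Nat.card ({(0:F)} : Set F) :=
            Nat.card_mono (Set.finite_singleton _) this
        _ = 1 := by simp
        _ ≤ q ^ (k+1) := Nat.one_le_pow _ _ hq1
    push_neg at hz
    obtain ⟨x, hxS, hx0⟩ := hz
    have hσinj : Function.Injective σ := σ.injective
    set d : ℕ → F := fun i => c i * σ^[i] x with hd
    have hdsum : ∑ i ∈ Finset.range (k + 2), d i = 0 := hxS
    have hdtop : d (k + 1) ≠ 0 := by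
      refine mul_ne_zero hc ?_
      intro h
      exact hx0 (Function.Injective.iterate hσinj (k+1) (by simpa using h))
    set e : ℕ → F := fun j => ∑ i ∈ Finset.Ico (j + 1) (k + 2), d i with he
    have hetop : e k ≠ 0 := by
      have : Finset.Ico (k + 1) (k + 2) = {k + 1} := by
        exact Nat.Ico_succ_singleton _
      simpa [he, this] using hdtop
    have hT := IH e hetop
    set T : Set F := {w : F | ∑ j ∈ Finset.range (k + 1), e j * σ^[j] w = 0} with hTdef
    -- key identity
    have key : ∀ z : F, x * z ∈ S → (σ z - z) ∈ T := by
      intro z hz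
      have hz' : ∑ i ∈ Finset.range (k + 2), d i * σ^[i] z = 0 := by
        have : ∑ i ∈ Finset.range (k + 2), c i * σ^[i] (x * z) =
            ∑ i ∈ Finset.range (k + 2), d i * σ^[i] z := by
          refine Finset.sum_congr rfl fun i _ => ?_
          have : σ^[i] (x * z) = σ^[i] x * σ^[i] z := by
            induction i with
            | zero => simp
            | succ n ih => simp [Function.iterate_succ_apply', ih, map_mul]
          rw [this, hd]; ring
        rw [← this]; exact hz
      show ∑ j ∈ Finset.range (k + 1), e j * σ^[j] (σ z - z) = 0
      have step1 : ∑ j ∈ Finset.range (k + 1), e j * σ^[j] (σ z - z)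
          = ∑ j ∈ Finset.range (k + 1), ∑ i ∈ Finset.Ico (j+1) (k+2),
              d i * σ^[j] (σ z - z) := by
        refine Finset.sum_congr rfl fun j _ => ?_
        rw [he, Finset.sum_mul]
      have step2 : ∑ j ∈ Finset.range (k + 1), ∑ i ∈ Finset.Ico (j+1) (k+2),
              d i * σ^[j] (σ z - z)
          = ∑ i ∈ Finset.range (k + 2), ∑ j ∈ Finset.range i,
              d i * σ^[j] (σ z - z) := by
        refine Finset.sum_comm' ?_
        intro j i
        simp only [Finset.mem_range, Finset.mem_Ico]
        omega
      have hsub : ∀ (j : ℕ) (a b : F), σ^[j] (a - b) = σ^[j] a - σ^[j] b := by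
        intro j
        induction j with
        | zero => simp
        | succ m ih => intro a b; simp [Function.iterate_succ_apply', ih, map_sub]
      have step3 : ∀ i : ℕ, ∑ j ∈ Finset.range i, σ^[j] (σ z - z) = σ^[i] z - z := by
        intro i
        have h1 : ∀ j : ℕ, σ^[j] (σ z - z) = σ^[j+1] z - σ^[j] z := fun j => by
          rw [hsub, ← Function.iterate_succ_apply]
        calc ∑ j ∈ Finset.range i, σ^[j] (σ z - z)
            = ∑ j ∈ Finset.range i, (σ^[j+1] z - σ^[j] z) :=
              Finset.sum_congr rfl fun j _ => h1 j
          _ = σ^[i] z - σ^[0] z := Finset.sum_range_sub (fun j => σ^[j] z) i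
          _ = σ^[i] z - z := by simp
      rw [step1, step2]
      calc ∑ i ∈ Finset.range (k + 2), ∑ j ∈ Finset.range i, d i * σ^[j] (σ z - z)
          = ∑ i ∈ Finset.range (k + 2), d i * (σ^[i] z - z) := by
            refine Finset.sum_congr rfl fun i _ => ?_
            rw [← Finset.mul_sum, step3]
        _ = ∑ i ∈ Finset.range (k + 2), d i * σ^[i] z
            - ∑ i ∈ Finset.range (k + 2), d i * z := by
            rw [← Finset.sum_sub_distrib]; exact Finset.sum_congr rfl fun i _ => by ring
        _ = 0 := by rw [hz', ← Finset.sum_mul, hdsum]; ring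
    -- counting
    have cardconv : ∀ (P : F → Prop) [DecidablePred P],
        Nat.card {y : F | P y} = (Finset.univ.filter P).card := by
      intro P _
      rw [Nat.card_eq_fintype_card]
      convert Fintype.card_subtype P
      exact Iff.rfl
    set A : Finset F := Finset.univ.filter (fun z => x * z ∈ S) with hA
    set B : Finset F := Finset.univ.filter (fun w => w ∈ T) with hB
    set Fx : Finset F := Finset.univ.filter (fun y => σ y = y) with hFx
    have hFxq : Fx.card ≤ q := by
      have := cardconv (fun y => σ y = y)
      rw [← this]; exact hfix
    have hBq : B.card ≤ q ^ k := by
      have := cardconv (fun w => w ∈ T)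
      rw [← this]; exact hT
    have hSA : Nat.card S = A.card := by
      have hcs := cardconv (fun y => y ∈ S)
      simp only [Set.setOf_mem_eq] at hcs
      rw [hcs]
      refine Finset.card_bij (fun z _ => x * z) ?_ ?_ ?_ |>.symm
      · intro z hz
        simp only [hA, Finset.mem_filter] at hz
        simp [hz.2]
      · intro a ha b hb hab
        exact mul_left_cancel₀ hx0 hab
      · intro y hy
        refine ⟨x⁻¹ * y, ?_, by field_simp⟩
        simp only [hA, Finset.mem_filter, Finset.mem_univ, true_and]
        have : x * (x⁻¹ * y) = y := by field_simp
        rw [this]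
        simpa using hy
    have hAB : A.card ≤ q * B.card := by
      refine Finset.card_le_mul_card_image_of_maps_to
        (f := fun z => σ z - z) (t := B) ?_ q ?_
      · intro a ha
        simp only [hA, Finset.mem_filter] at ha
        simp only [hB, Finset.mem_filter, Finset.mem_univ, true_and]
        exact key a ha.2
      · intro b hb
        by_cases hne : (Finset.univ.filter (fun a => a ∈ A ∧ σ a - a = b)).Nonempty
        · obtain ⟨a₀, ha₀⟩ := hne
          simp only [Finset.mem_filter, Finset.mem_univ, true_and] at ha₀
          calc (A.filter (fun a => σ a - a = b)).card
              ≤ Fx.card := by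
                refine Finset.card_le_card_of_injOn (fun a => a - a₀) ?_ ?_
                · intro a ha
                  simp only [Finset.mem_coe, Finset.mem_filter] at ha
                  simp only [hFx, Finset.mem_coe, Finset.mem_filter, Finset.mem_univ, true_and]
                  rw [map_sub]
                  have h1 : σ a = b + a := by rw [← ha.2]; ring
                  have h2 : σ a₀ = b + a₀ := by rw [← ha₀.2]; ring
                  rw [h1, h2]; ring
                · intro u _ v _ huv
                  exact sub_left_injective huv
            _ ≤ q := hFxq
        · rw [Finset.not_nonempty_iff_eq_empty] at hne
          have : A.filter (fun a => σ a - a = b) = ∅ := by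
            rw [← hne]
            ext a
            simp only [Finset.mem_filter, Finset.mem_univ, true_and]
          simp [this]
    calc Nat.card S = A.card := hSA
      _ ≤ q * B.card := hAB
      _ ≤ q * q ^ k := Nat.mul_le_mul_left q hBq
      _ = q ^ (k + 1) := by ring

theorem stmt_9 (q n k s : ℕ) (hq : IsPrimePow q) (hn : 0 < n)
    (hk : k ≤ n - 1) (hs : Nat.gcd s n = 1)
    (K F : Type) [Field K] [Fintype K] [Field F] [Fintype F] [Algebra K F]
    (hK : Fintype.card K = q) (hF : Fintype.card F = q ^ n)
    (c : ℕ → F) (hck : c k ≠ 0) :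
    Nat.card {x : F | ∑ i ∈ Finset.range (k + 1), c i * x ^ q ^ (s * i) = 0} ≤ q ^ k ∧
    ∀ φ : F →ₗ[K] F,
      (∀ x : F, φ x = ∑ i ∈ Finset.range (k + 1), c i * x ^ q ^ (s * i)) →
      n - k ≤ Module.finrank K (LinearMap.range φ) := by
  classical
  have hq2 : 2 ≤ q := hq.two_le
  obtain ⟨p, e, hp', he, hpe⟩ := hq
  have hp : p.Prime := hp'.nat_prime
  haveI : Fact p.Prime := ⟨hp⟩
  haveI hcharK : CharP K p := by
    obtain ⟨m, hpr, hcard⟩ := FiniteField.card K (ringChar K)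
    have h1 : p ∣ ringChar K ^ (m : ℕ) := by
      rw [← hcard, hK, ← hpe]; exact dvd_pow_self p he.ne'
    have h2 : p = ringChar K :=
      (Nat.prime_dvd_prime_iff_eq hp hpr).mp (hp.dvd_of_dvd_pow h1)
    rw [h2]; exact ringChar.charP K
  haveI hcharF : CharP F p := charP_of_injective_algebraMap (algebraMap K F).injective p
  set σ : F →+* F := (frobenius F p) ^ (e * s) with hσdef
  have hσit : ∀ (i : ℕ) (x : F), σ^[i] x = x ^ q ^ (s * i) := by
    intro i x
    rw [hσdef, RingHom.coe_pow, ← Function.iterate_mul, iterate_frobenius, ← hpe, ← pow_mul]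
    ring_nf
  have hσfun : ∀ x : F, σ x = x ^ q ^ s := fun x => by simpa using hσit 1 x
  -- fixed points of σ number at most q
  have hfix : Nat.card {x : F | σ x = x} ≤ q := by
    have hsub : {x : F | σ x = x} ⊆ {x : F | x ^ q = x} := by
      intro x hx
      simp only [Set.mem_setOf_eq, hσfun] at hx ⊢
      rcases eq_or_ne x 0 with rfl | hx0
      · rw [zero_pow (by omega)]
      · have hq1n : ∀ m : ℕ, 1 ≤ q ^ m := fun m => Nat.one_le_pow _ _ (by omega)
        have hordsn : ∀ m : ℕ, x ^ q ^ m = x → orderOf x ∣ q ^ m - 1 := by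
          intro m hm
          apply orderOf_dvd_of_pow_eq_one
          have hmm : x ^ (q ^ m - 1) * x = 1 * x := by
            rw [one_mul, ← pow_succ, Nat.sub_add_cancel (hq1n m), hm]
          exact mul_right_cancel₀ hx0 hmm
        have h1 : orderOf x ∣ q ^ s - 1 := hordsn s hx
        have h2 : orderOf x ∣ q ^ n - 1 := hordsn n (by rw [← hF]; exact FiniteField.pow_card x)
        set r := orderOf x with hr
        have hcast : ∀ m : ℕ, r ∣ q ^ m - 1 → ((q : ZMod r)) ^ m = 1 := by
          intro m hm
          have h0 : ((q ^ m - 1 : ℕ) : ZMod r) = 0 :=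
            (ZMod.natCast_eq_zero_iff _ _).mpr hm
          have h' : ((q ^ m - 1 : ℕ) : ZMod r) = (q : ZMod r) ^ m - 1 := by
            rw [Nat.cast_sub (hq1n m)]; push_cast; ring
          rw [h'] at h0
          linear_combination h0
        have ho : orderOf (q : ZMod r) ∣ Nat.gcd s n :=
          Nat.dvd_gcd (orderOf_dvd_of_pow_eq_one (hcast s h1))
            (orderOf_dvd_of_pow_eq_one (hcast n h2))
        rw [hs] at ho
        have hq1' : (q : ZMod r) = 1 := orderOf_eq_one_iff.mp (Nat.dvd_one.mp ho)
        have hq10 : ((q - 1 : ℕ) : ZMod r) = 0 := by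
          rw [Nat.cast_sub (by omega)]; simp [hq1']
        have hdvd : r ∣ q - 1 := (ZMod.natCast_eq_zero_iff _ _).mp hq10
        have hx1 : x ^ (q - 1) = 1 := orderOf_dvd_iff_pow_eq_one.mp hdvd
        calc x ^ q = x ^ (q - 1) * x := by rw [← pow_succ, Nat.sub_add_cancel (by omega)]
          _ = x := by rw [hx1, one_mul]
    refine le_trans (Nat.card_mono (Set.toFinite _) hsub) ?_
    -- card of {x | x^q = x} bounded by degree of X^q - X
    set P : Polynomial F := Polynomial.X ^ q - Polynomial.X with hP
    have hPdeg : P.degree = q := by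
      rw [hP, Polynomial.degree_sub_eq_left_of_degree_lt]
      · exact Polynomial.degree_X_pow q
      · rw [Polynomial.degree_X_pow, Polynomial.degree_X]
        exact_mod_cast hq2
    have hPne : P ≠ 0 := by
      intro h
      rw [h, Polynomial.degree_zero] at hPdeg
      exact absurd hPdeg (by simp)
    have hsub2 : {x : F | x ^ q = x} ⊆ (P.roots.toFinset : Set F) := by
      intro x hx
      simp only [Set.mem_setOf_eq] at hx
      simp only [Finset.coe_sort_coe, Multiset.mem_toFinset, Finset.mem_coe]
      rw [Polynomial.mem_roots hPne]
      simp [Polynomial.IsRoot, hP, sub_eq_zero, hx]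
    refine le_trans (Nat.card_mono (Set.toFinite _) hsub2) ?_
    rw [Nat.card_coe_set_eq, Set.ncard_coe_finset]
    calc P.roots.toFinset.card ≤ Multiset.card P.roots := Multiset.toFinset_card_le _
      _ ≤ P.natDegree := Polynomial.card_roots' P
      _ = q := Polynomial.natDegree_eq_of_degree_eq_some hPdeg
  have hroots := core_lin F q (by omega) σ hfix k c hck
  have hsetEq : {x : F | ∑ i ∈ Finset.range (k + 1), c i * σ^[i] x = 0}
      = {x : F | ∑ i ∈ Finset.range (k + 1), c i * x ^ q ^ (s * i) = 0} := by
    ext x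
    simp only [Set.mem_setOf_eq]
    constructor <;> intro h <;>
      [rw [← h]; rw [← h]] <;> exact Finset.sum_congr rfl fun i _ => by rw [hσit]
  rw [hsetEq] at hroots
  refine ⟨hroots, ?_⟩
  intro φ hφ
  have hfr : Module.finrank K F = n := by
    have h := Module.card_eq_pow_finrank (K := K) (V := F)
    rw [hK, hF] at h
    exact Nat.pow_right_injective hq2 h.symm
  have hkercard : Nat.card (LinearMap.ker φ) ≤ q ^ k := by
    refine le_trans (le_of_eq (Nat.card_congr (Equiv.subtypeEquivRight ?_))) hroots
    intro x
    simp only [LinearMap.mem_ker, Set.mem_setOf_eq, hφ]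
  have hkerrank : Module.finrank K (LinearMap.ker φ) ≤ k := by
    have hc := Module.card_eq_pow_finrank (K := K) (V := LinearMap.ker φ)
    rw [hK] at hc
    rw [Nat.card_eq_fintype_card, hc] at hkercard
    exact (Nat.pow_le_pow_iff_right hq2).mp hkercard
  have hrn := LinearMap.finrank_range_add_finrank_ker φ
  rw [hfr] at hrn
  omega
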